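/- For every positive integer d, the number of pairs (G, g), where G is an additive subgroup of (ℤ/dℤ) × (ℤ/dℤ) of cardinality d and g is a nonzero element of G, is equal to σ₁(d)·(d − 1). -/

import Mathlib

open AddSubgroup
variable (d : ℕ)

def Gab (a b : ℕ) : AddSubgroup (ZMod d × ZMod d) :=
  AddSubgroup.closure {((a : ZMod d), (b : ZMod d)), ((0 : ZMod d), ((d / a : ℕ) : ZMod d))}

lemma mem_Gab {a b : ℕ} {z : ZMod d × ZMod d} :
    z ∈ Gab d a b ↔ ∃ m n : ℤ,
      m • (((a : ZMod d), (b : ZMod d)) : ZMod d × ZMod d)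
        + n • (((0 : ZMod d), ((d / a : ℕ) : ZMod d)) : ZMod d × ZMod d) = z :=
  AddSubgroup.mem_closure_pair

lemma fst_gen_mem {a b : ℕ} : ((a : ZMod d), (b : ZMod d)) ∈ Gab d a b :=
  AddSubgroup.subset_closure (Set.mem_insert _ _)

lemma snd_gen_mem {a b : ℕ} : ((0 : ZMod d), ((d / a : ℕ) : ZMod d)) ∈ Gab d a b :=
  AddSubgroup.subset_closure (Set.mem_insert_of_mem _ rfl)

lemma card_zmult {a : ℕ} (ha : a ∣ d) (hd : 0 < d) :
    Nat.card (zmultiples ((a : ℕ) : ZMod d)) = d / a := by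
  rw [Nat.card_zmultiples, ZMod.addOrderOf_coe a hd.ne', Nat.gcd_eq_right ha]

lemma Gab_inj (hd : 0 < d) {a b a' b' : ℕ} (ha : a ∣ d) (ha0 : 0 < a) (hb : b < d / a)
    (ha' : a' ∣ d) (ha0' : 0 < a') (hb' : b' < d / a')
    (h : Gab d a b = Gab d a' b') : a = a' ∧ b = b' := by
  have key : ∀ a₁ b₁ a₂ b₂ : ℕ, Gab d a₁ b₁ = Gab d a₂ b₂ →
      ((a₂ : ZMod d)) ∈ zmultiples ((a₁ : ℕ) : ZMod d) := by
    intro a₁ b₁ a₂ b₂ hG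
    have hmem : ((a₂ : ZMod d), (b₂ : ZMod d)) ∈ Gab d a₁ b₁ := hG ▸ fst_gen_mem d
    rw [mem_Gab] at hmem
    obtain ⟨m, n, hmn⟩ := hmem
    refine ⟨m, ?_⟩
    have := congrArg Prod.fst hmn
    simpa using this
  have haa : a = a' := by
    have h1 : zmultiples ((a' : ℕ) : ZMod d) ≤ zmultiples ((a : ℕ) : ZMod d) :=
      (zmultiples_le).mpr (key a b a' b' h)
    have h2 : zmultiples ((a : ℕ) : ZMod d) ≤ zmultiples ((a' : ℕ) : ZMod d) :=
      (zmultiples_le).mpr (key a' b' a b h.symm)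
    have hq : d / a = d / a' := by
      rw [← card_zmult d ha hd, ← card_zmult d ha' hd, le_antisymm h2 h1]
    calc a = d / (d / a) := (Nat.div_div_self ha hd.ne').symm
    _ = d / (d / a') := by rw [hq]
    _ = a' := Nat.div_div_self ha' hd.ne'
  subst haa
  refine ⟨rfl, ?_⟩
  set c := d / a with hc
  have hdc : d = a * c := by rw [hc, Nat.mul_div_cancel' ha]
  have hc0 : 0 < c := Nat.div_pos (Nat.le_of_dvd hd ha) ha0
  have hdc' : (d : ℤ) = a * c := by exact_mod_cast hdc
  have hmem : ((a : ZMod d), (b' : ZMod d)) ∈ Gab d a b := h ▸ fst_gen_mem d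
  rw [mem_Gab] at hmem
  obtain ⟨m, n, hmn⟩ := hmem
  have h1 : ((a * (m - 1) : ℤ) : ZMod d) = 0 := by
    have := congrArg Prod.fst hmn
    simp only [Prod.smul_mk, Prod.mk_add_mk, Prod.fst_add, zsmul_eq_mul] at this
    push_cast
    push_cast at this
    linear_combination this
  rw [ZMod.intCast_zmod_eq_zero_iff_dvd] at h1
  have hct : (c : ℤ) ∣ (m - 1) := by
    rw [hdc'] at h1
    exact (mul_dvd_mul_iff_left (by exact_mod_cast ha0.ne' : (a : ℤ) ≠ 0)).mp h1
  obtain ⟨t, ht⟩ := hct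
  have h2 : ((b * m + c * n - b' : ℤ) : ZMod d) = 0 := by
    have := congrArg Prod.snd hmn
    simp only [Prod.smul_mk, Prod.mk_add_mk, Prod.snd_add, zsmul_eq_mul] at this
    push_cast
    push_cast at this
    linear_combination this
  rw [ZMod.intCast_zmod_eq_zero_iff_dvd] at h2
  obtain ⟨u, hu⟩ := h2
  have hm : (m : ℤ) = 1 + c * t := by linarith [ht]
  have hdiff : (c : ℤ) ∣ (b - b' : ℤ) := by
    refine ⟨a * u - b * t - n, ?_⟩
    have : (b * m + c * n - b' : ℤ) = d * u := hu
    rw [hm, hdc'] at this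
    linarith [this]
  have hblt : (b : ℤ) < c := by exact_mod_cast hb
  have hblt' : (b' : ℤ) < c := by exact_mod_cast hb'
  have hb0 : (0:ℤ) ≤ b := Int.natCast_nonneg b
  have hb0' : (0:ℤ) ≤ b' := Int.natCast_nonneg b'
  have : (b - b' : ℤ) = 0 := Int.eq_zero_of_abs_lt_dvd hdiff (by rw [abs_lt]; constructor <;> linarith)
  omega

lemma natCast_zmod_inj {m n : ℕ} (hm : m < d) (hn : n < d) (h : (m : ZMod d) = n) : m = n := by
  have hd : 0 < d := lt_of_le_of_lt (Nat.zero_le m) hm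
  haveI : NeZero d := ⟨hd.ne'⟩
  have := congrArg ZMod.val h
  rwa [ZMod.val_cast_of_lt hm, ZMod.val_cast_of_lt hn] at this


lemma card_Gab {a b : ℕ} (ha : a ∣ d) (ha0 : 0 < a) (hd : 0 < d) :
    Nat.card (Gab d a b) = d := by
  set c := d / a with hc
  have hdc : d = a * c := by rw [hc, Nat.mul_div_cancel' ha]
  have hc0 : 0 < c := Nat.div_pos (Nat.le_of_dvd hd ha) ha0
  haveI : NeZero c := ⟨hc0.ne'⟩
  haveI : NeZero a := ⟨ha0.ne'⟩
  haveI : NeZero d := ⟨hd.ne'⟩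
  have hdc' : (d : ℤ) = a * c := by exact_mod_cast hdc
  have hmemf : ∀ (x : ZMod c) (y : ZMod a),
      (((a * x.val : ℕ) : ZMod d), ((b * x.val + c * y.val : ℕ) : ZMod d)) ∈ Gab d a b := by
    intro x y
    rw [mem_Gab]
    refine ⟨(x.val : ℤ), (y.val : ℤ), ?_⟩
    simp only [Prod.smul_mk, Prod.mk_add_mk, Prod.mk.injEq, zsmul_eq_mul]
    constructor <;> · push_cast; ring
  let f : ZMod c × ZMod a → Gab d a b := fun p =>
    ⟨(((a * p.1.val : ℕ) : ZMod d), ((b * p.1.val + c * p.2.val : ℕ) : ZMod d)), hmemf p.1 p.2⟩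
  have hlt1 : ∀ x : ZMod c, a * x.val < d := fun x => by
    rw [hdc]; exact mul_lt_mul_of_pos_left (ZMod.val_lt x) ha0
  have hlt2 : ∀ y : ZMod a, c * y.val < d := fun y => by
    rw [hdc, mul_comm a c]; exact mul_lt_mul_of_pos_left (ZMod.val_lt y) hc0
  have hbij : Function.Bijective f := by
    constructor
    · rintro ⟨x₁, y₁⟩ ⟨x₂, y₂⟩ h
      simp only [f, Subtype.mk_eq_mk, Prod.mk.injEq] at h
      obtain ⟨h1, h2⟩ := h
      have hx : x₁.val = x₂.val :=
        Nat.eq_of_mul_eq_mul_left ha0 (natCast_zmod_inj d (hlt1 x₁) (hlt1 x₂) h1)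
      have hxx : x₁ = x₂ := ZMod.val_injective _ hx
      subst hxx
      rw [hx] at h2
      have h2' : ((c * y₁.val : ℕ) : ZMod d) = ((c * y₂.val : ℕ) : ZMod d) := by
        push_cast at h2 ⊢
        linear_combination h2
      have hy : y₁.val = y₂.val :=
        Nat.eq_of_mul_eq_mul_left hc0 (natCast_zmod_inj d (hlt2 y₁) (hlt2 y₂) h2')
      exact Prod.ext rfl (ZMod.val_injective _ hy)
    · rintro ⟨z, hz⟩
      rw [mem_Gab] at hz
      obtain ⟨m, n, hmn⟩ := hz
      set x : ZMod c := (m : ZMod c) with hxdef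
      have hdvd : (c : ℤ) ∣ m - x.val := by
        rw [← ZMod.intCast_zmod_eq_zero_iff_dvd]
        push_cast
        simp [hxdef, ZMod.intCast_cast, ZMod.natCast_val, ZMod.intCast_zmod_cast]
      obtain ⟨t, ht⟩ := hdvd
      have hm : (m : ℤ) = x.val + c * t := by linarith [ht]
      set y : ZMod a := ((b * t + n : ℤ) : ZMod a) with hydef
      have hdvd2 : (a : ℤ) ∣ (b * t + n) - y.val := by
        rw [← ZMod.intCast_zmod_eq_zero_iff_dvd]
        push_cast
        simp [hydef, ZMod.intCast_cast, ZMod.natCast_val, ZMod.intCast_zmod_cast]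
      obtain ⟨s, hs⟩ := hdvd2
      have hbn : (b * t + n : ℤ) = y.val + a * s := by linarith [hs]
      refine ⟨(x, y), ?_⟩
      simp only [f, Subtype.mk_eq_mk]
      rw [← hmn]
      have e1 : ((m * a : ℤ) : ZMod d) = ((a * x.val : ℤ) : ZMod d) := by
        have : (m * a : ℤ) = a * x.val + d * t := by linear_combination a * hm - t * hdc'
        rw [this]
        push_cast
        simp [ZMod.natCast_self]
      have e2 : ((b * m + c * n : ℤ) : ZMod d) = ((b * x.val + c * y.val : ℤ) : ZMod d) := by
        have : (b * m + c * n : ℤ) = (b * x.val + c * y.val) + d * s := by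
          linear_combination b * hm + c * hbn - s * hdc'
        rw [this]
        push_cast
        simp [ZMod.natCast_self]
      push_cast at e1 e2
      simp only [Prod.smul_mk, Prod.mk_add_mk, Prod.mk.injEq, zsmul_eq_mul]
      constructor
      · push_cast
        linear_combination -e1
      · push_cast
        linear_combination -e2
  have := Nat.card_eq_of_bijective f hbij
  rw [← this, Nat.card_prod, Nat.card_zmod, Nat.card_zmod, hdc, mul_comm]

lemma subgroup_zmod_eq (hd : 0 < d) (K : AddSubgroup (ZMod d)) :
    K = zmultiples ((d / Nat.card K : ℕ) : ZMod d) := by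
  haveI : NeZero d := ⟨hd.ne'⟩
  set k := Nat.card K with hk
  have hkd : k ∣ d := by
    have := AddSubgroup.card_addSubgroup_dvd_card K
    rwa [Nat.card_zmod] at this
  have hk0 : 0 < k := Nat.card_pos
  have hle : K ≤ zmultiples ((d / k : ℕ) : ZMod d) := by
    intro x hx
    have hord : addOrderOf (⟨x, hx⟩ : K) ∣ k := addOrderOf_dvd_natCard _
    have hkx0 : k • (⟨x, hx⟩ : K) = 0 := by
      rw [← addOrderOf_dvd_iff_nsmul_eq_zero]; exact hord
    have hkx : k • x = 0 := by
      have := congrArg (Subtype.val) hkx0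
      simpa using this
    -- from k • x = 0 deduce x ∈ zmultiples (d/k)
    have hval : (d : ℕ) ∣ k * x.val := by
      have : ((k * x.val : ℕ) : ZMod d) = 0 := by
        push_cast
        rw [ZMod.natCast_val, ZMod.cast_id]
        simpa [nsmul_eq_mul] using hkx
      rwa [ZMod.natCast_eq_zero_iff] at this
    have hdiv : (d / k) ∣ x.val := by
      obtain ⟨m, hm⟩ := hval
      have hd' : d = k * (d / k) := (Nat.mul_div_cancel' hkd).symm
      have h2 : k * x.val = k * ((d / k) * m) := by
        calc k * x.val = d * m := hm
        _ = k * (d / k) * m := by rw [← hd']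
        _ = k * ((d / k) * m) := by ring
      exact ⟨m, Nat.eq_of_mul_eq_mul_left hk0 h2⟩
    obtain ⟨m, hm⟩ := hdiv
    refine ⟨(m : ℤ), ?_⟩
    have hxx : x = ((d / k * m : ℕ) : ZMod d) := by
      rw [← hm, ZMod.natCast_val, ZMod.cast_id]
    rw [hxx]
    simp only [zsmul_eq_mul]
    push_cast
    ring
  have hcards : Nat.card (zmultiples ((d / k : ℕ) : ZMod d)) ≤ Nat.card K := by
    rw [card_zmult d (Nat.div_dvd_of_dvd hkd) hd, Nat.div_div_self hkd hd.ne', hk]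
  exact AddSubgroup.eq_of_le_of_card_ge hle hcards

lemma Gab_surj (hd : 0 < d) (G : AddSubgroup (ZMod d × ZMod d)) (hG : Nat.card G = d) :
    ∃ a b : ℕ, a ∣ d ∧ 0 < a ∧ b < d / a ∧ Gab d a b = G := by
  haveI : NeZero d := ⟨hd.ne'⟩
  set f : G →+ ZMod d := (AddMonoidHom.fst (ZMod d) (ZMod d)).comp G.subtype with hf
  set H := f.range with hH
  set h := Nat.card H with hh
  have hhd : h ∣ d := by
    have := AddSubgroup.card_addSubgroup_dvd_card H
    rwa [Nat.card_zmod] at this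
  have hh0 : 0 < h := Nat.card_pos
  set a := d / h with ha
  have had : a ∣ d := Nat.div_dvd_of_dvd hhd
  have ha0 : 0 < a := Nat.div_pos (Nat.le_of_dvd hd hhd) hh0
  have hda : d / a = h := Nat.div_div_self hhd hd.ne'
  have hHeq : H = zmultiples ((a : ℕ) : ZMod d) := by
    have := subgroup_zmod_eq d hd H
    rwa [← hh, ← ha] at this
  have haH : ((a : ℕ) : ZMod d) ∈ H := by rw [hHeq]; exact mem_zmultiples _
  obtain ⟨g, hgval⟩ := haH
  set K : AddSubgroup (ZMod d) := G.comap (AddMonoidHom.inr (ZMod d) (ZMod d)) with hK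
  have hKmem : ∀ v : ZMod d, v ∈ K ↔ ((0 : ZMod d), v) ∈ G := by
    intro v; rfl
  -- K ≃ f.ker
  have hcardker : Nat.card f.ker = a := by
    have h1 : Nat.card G = Nat.card H * Nat.card f.ker := by
      rw [AddSubgroup.card_eq_card_quotient_mul_card_addSubgroup f.ker]
      congr 1
      exact Nat.card_congr (QuotientAddGroup.quotientKerEquivRange f).toEquiv
    have h2 : d = h * Nat.card f.ker := by
      calc d = Nat.card G := hG.symm
      _ = Nat.card H * Nat.card f.ker := h1
      _ = h * Nat.card f.ker := by rw [hh]
    have : a = (h * Nat.card f.ker) / h := by rw [← h2]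
    rw [this, Nat.mul_div_cancel_left _ hh0]
  have hcardK : Nat.card K = a := by
    rw [← hcardker]
    refine Nat.card_congr ⟨fun v => ⟨⟨((0 : ZMod d), (v : ZMod d)), (hKmem v).mp v.2⟩,
      AddMonoidHom.mem_ker.mpr rfl⟩, fun w => ⟨(w.1.1 : ZMod d × ZMod d).2, ?_⟩, fun v => rfl, fun w => ?_⟩
    · have h0 : (w.1.1 : ZMod d × ZMod d).1 = 0 := AddMonoidHom.mem_ker.mp w.2
      rw [hKmem]
      have : ((0 : ZMod d), (w.1.1 : ZMod d × ZMod d).2) = (w.1.1 : ZMod d × ZMod d) := by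
        rw [← h0]
      rw [this]
      exact w.1.2
    · ext
      · exact (AddMonoidHom.mem_ker.mp w.2).symm
      · rfl
  have hKeq : K = zmultiples ((h : ℕ) : ZMod d) := by
    have := subgroup_zmod_eq d hd K
    rwa [hcardK, hda] at this
  set b₀ : ZMod d := (g : ZMod d × ZMod d).2 with hb₀
  have hg1 : (g : ZMod d × ZMod d).1 = ((a : ℕ) : ZMod d) := hgval
  set b := b₀.val % h with hb
  have hblt : b < d / a := by rw [hda]; exact Nat.mod_lt _ hh0
  set q := b₀.val / h with hq
  have hsplit : b₀ = ((h * q + b : ℕ) : ZMod d) := by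
    rw [hb, hq, Nat.div_add_mod, ZMod.natCast_val, ZMod.cast_id]
  have hmem2 : ((0 : ZMod d), ((d / a : ℕ) : ZMod d)) ∈ G := by
    rw [← hKmem, hda, hKeq]
    exact mem_zmultiples _
  have hsub : ((0 : ZMod d), b₀ - ((b : ℕ) : ZMod d)) ∈ G := by
    rw [← hKmem, hKeq]
    refine ⟨(q : ℤ), ?_⟩
    rw [hsplit]
    simp only [zsmul_eq_mul]
    push_cast
    ring
  have hmem1 : (((a : ℕ) : ZMod d), ((b : ℕ) : ZMod d)) ∈ G := by
    have heq : (((a : ℕ) : ZMod d), ((b : ℕ) : ZMod d))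
        = (g : ZMod d × ZMod d) - ((0 : ZMod d), b₀ - ((b : ℕ) : ZMod d)) := by
      apply Prod.ext
      · simp [hg1]
      · simp [hb₀]
    rw [heq]
    exact sub_mem g.2 hsub
  refine ⟨a, b, had, ha0, hblt, ?_⟩
  have hle : Gab d a b ≤ G := by
    rw [Gab]
    rw [AddSubgroup.closure_le]
    rintro z (rfl | hz)
    · exact hmem1
    · rw [Set.mem_singleton_iff] at hz
      rw [hz]
      exact hmem2
  exact AddSubgroup.eq_of_le_of_card_ge hle (by rw [hG, card_Gab d had ha0 hd])

lemma card_subtype_ne {α : Type*} [Finite α] (a : α) :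
    Nat.card {x : α // x ≠ a} = Nat.card α - 1 := by
  classical
  haveI := Fintype.ofFinite α
  rw [Nat.card_eq_fintype_card, Nat.card_eq_fintype_card]
  have h1 : Fintype.card {x : α // x ≠ a} = Fintype.card {x : α // ¬ (x = a)} := by
    apply Fintype.card_congr
    exact Equiv.subtypeEquivRight (fun _ => Iff.rfl)
  rw [h1, Fintype.card_subtype_compl, Fintype.card_subtype_eq]


/-- σ_k(d): the sum of the k-th powers of the positive divisors of d. -/
def sigma (k d : ℕ) : ℕ := ∑ e ∈ d.divisors, e ^ k

/-- For every positive integer `d`, the number of pairs `(G, g)` with `G` an additive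
subgroup of `(ℤ/dℤ) × (ℤ/dℤ)` of cardinality `d` and `g` a nonzero element of `G`,
equals `σ₁(d) * (d - 1)`. -/
theorem count_subgroup_element_pairs (d : ℕ) (hd : 0 < d) :
    Nat.card {p : AddSubgroup (ZMod d × ZMod d) × (ZMod d × ZMod d) //
      Nat.card p.1 = d ∧ p.2 ∈ p.1 ∧ p.2 ≠ 0} = sigma 1 d * (d - 1) := by
  haveI : NeZero d := ⟨hd.ne'⟩
  classical
  -- step 1: split off the element count
  let T := {G : AddSubgroup (ZMod d × ZMod d) // Nat.card G = d}
  have e1 : {p : AddSubgroup (ZMod d × ZMod d) × (ZMod d × ZMod d) //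
      Nat.card p.1 = d ∧ p.2 ∈ p.1 ∧ p.2 ≠ 0}
      ≃ Σ G : T, {g : ZMod d × ZMod d // g ∈ G.1 ∧ g ≠ 0} :=
    { toFun := fun p => ⟨⟨p.1.1, p.2.1⟩, ⟨p.1.2, p.2.2.1, p.2.2.2⟩⟩
      invFun := fun q => ⟨(q.1.1, q.2.1), q.1.2, q.2.2.1, q.2.2.2⟩
      left_inv := fun p => rfl
      right_inv := fun q => rfl }
  have hfiber : ∀ G : T, Nat.card {g : ZMod d × ZMod d // g ∈ G.1 ∧ g ≠ 0} = d - 1 := by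
    intro G
    have e2 : {g : ZMod d × ZMod d // g ∈ G.1 ∧ g ≠ 0} ≃ {x : G.1 // x ≠ 0} :=
      { toFun := fun g => ⟨⟨g.1, g.2.1⟩, fun hc => g.2.2 (congrArg Subtype.val hc)⟩
        invFun := fun x => ⟨x.1.1, x.1.2, fun hz => x.2 (Subtype.ext hz)⟩
        left_inv := fun g => rfl
        right_inv := fun x => rfl }
    rw [Nat.card_congr e2, card_subtype_ne, G.2]
  have e3 : (Σ G : T, {g : ZMod d × ZMod d // g ∈ G.1 ∧ g ≠ 0}) ≃ T × Fin (d - 1) :=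
    (Equiv.sigmaCongrRight fun G => Finite.equivFinOfCardEq (hfiber G)).trans
      (Equiv.sigmaEquivProd T (Fin (d - 1)))
  rw [Nat.card_congr (e1.trans e3), Nat.card_prod]
  -- step 2: count subgroups of order d
  have hT : Nat.card T = sigma 1 d := by
    let P := {x : ℕ × ℕ // x.1 ∣ d ∧ 0 < x.1 ∧ x.2 < d / x.1}
    let φ : P → T := fun x => ⟨Gab d x.1.1 x.1.2, card_Gab d x.2.1 x.2.2.1 hd⟩
    have hbij : Function.Bijective φ := by
      constructor
      · rintro ⟨⟨a, b⟩, ha, ha0, hb⟩ ⟨⟨a', b'⟩, ha', ha0', hb'⟩ h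
        have := Gab_inj d hd ha ha0 hb ha' ha0' hb' (congrArg Subtype.val h)
        exact Subtype.ext (Prod.ext this.1 this.2)
      · rintro ⟨G, hG⟩
        obtain ⟨a, b, ha, ha0, hb, hGab⟩ := Gab_surj d hd G hG
        exact ⟨⟨(a, b), ha, ha0, hb⟩, Subtype.ext hGab⟩
    rw [← Nat.card_eq_of_bijective φ hbij]
    have e4 : P ≃ Σ a : d.divisors, Fin (d / (a : ℕ)) :=
      { toFun := fun x => ⟨⟨x.1.1, Nat.mem_divisors.mpr ⟨x.2.1, hd.ne'⟩⟩, ⟨x.1.2, x.2.2.2⟩⟩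
        invFun := fun y => ⟨(y.1.1, y.2.1), (Nat.mem_divisors.mp y.1.2).1,
          Nat.pos_of_mem_divisors y.1.2, y.2.2⟩
        left_inv := fun x => rfl
        right_inv := fun y => rfl }
    rw [Nat.card_congr e4, Nat.card_eq_fintype_card, Fintype.card_sigma]
    simp only [Fintype.card_fin]
    rw [Finset.sum_coe_sort d.divisors (fun a => d / a)]
    have := Nat.sum_div_divisors d (fun e => e)
    rw [this]
    simp [sigma, pow_one]
  rw [hT]
  simp
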